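/- arXiv:0904.2903 — 2 statements merged into one kernel-verified Lean document; each statement's English description precedes it below -/
import Mathlib

section
/- Let G be a Lie group with finitely many components, let A be a compact Lie group acting on G by automorphisms, and let K be an A-invariant maximal compact subgroup of G. Then K ⋊ A is a maximal compact subgroup of the semidirect product G ⋊ A. -/
open scoped Manifold Pointwise

/-- The topology on the semidirect product `G ⋊[φ] A`: the underlying space is `G × A`, with the
product topology. -/
instance semidirectProductTopology {G A : Type*} [Group G] [Group A] [TopologicalSpace G]
    [TopologicalSpace A] (φ : A →* MulAut G) : TopologicalSpace (G ⋊[φ] A) :=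
  TopologicalSpace.induced (fun p : G ⋊[φ] A => (p.left, p.right)) inferInstance

/-- A charted space modelled on a T2 space is T1. -/
theorem aux_t1Space_of_chartedSpace {H X : Type*} [TopologicalSpace H] [TopologicalSpace X]
    [T2Space H] [ChartedSpace H X] : T1Space X := by
  rw [t1Space_iff_exists_open]
  intro x y hxy
  set e := chartAt H x with he
  by_cases hy : y ∈ e.source
  · have hne : e x ≠ e y := fun h => hxy (e.injOn (mem_chart_source H x) hy h)
    refine ⟨e.source ∩ e ⁻¹' {z | z ≠ e y}, e.isOpen_inter_preimage isOpen_ne,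
      ⟨mem_chart_source H x, hne⟩, ?_⟩
    rintro ⟨-, h2⟩
    exact h2 rfl
  · exact ⟨e.source, e.open_source, mem_chart_source H x, hy⟩

/-- The semidirect product is homeomorphic to the product. -/
def semidirectProductHomeomorph {G A : Type*} [Group G] [Group A] [TopologicalSpace G]
    [TopologicalSpace A] (φ : A →* MulAut G) : (G ⋊[φ] A) ≃ₜ G × A where
  toFun p := (p.left, p.right)
  invFun q := ⟨q.1, q.2⟩
  left_inv p := rfl
  right_inv q := rfl
  continuous_toFun := continuous_induced_dom
  continuous_invFun := continuous_induced_rng.mpr continuous_id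

/-- Let `G` be a Lie group with finitely many components, let `A` be a compact
Lie group acting on `G` by automorphisms, and let `K` be an `A`-invariant maximal compact
subgroup of `G`.  Then `K ⋊ A = {(k, a) : k ∈ K, a ∈ A}` is a maximal compact subgroup of the
semidirect product `G ⋊ A`. -/
theorem semidirectProduct_maximal_compact
    -- `G` is a (finite-dimensional real) Lie group
    {E : Type*} [NormedAddCommGroup E] [NormedSpace ℝ E] [FiniteDimensional ℝ E]
    {G : Type*} [TopologicalSpace G] [ChartedSpace E G] [Group G] [IsTopologicalGroup G]
    [LieGroup 𝓘(ℝ, E) (⊤ : ℕ∞) G]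
    -- with finitely many connected components
    (hG : Finite (ConnectedComponents G))
    -- `A` is a compact (finite-dimensional real) Lie group
    {F : Type*} [NormedAddCommGroup F] [NormedSpace ℝ F] [FiniteDimensional ℝ F]
    {A : Type*} [TopologicalSpace A] [ChartedSpace F A] [Group A] [IsTopologicalGroup A]
    [LieGroup 𝓘(ℝ, F) (⊤ : ℕ∞) A] [CompactSpace A]
    -- `A` acts on `G` by automorphisms, continuously in both variables, each `a` acting smoothly
    [MulDistribMulAction A G] [ContinuousSMul A G]
    (hsmooth : ∀ a : A, ContMDiff 𝓘(ℝ, E) 𝓘(ℝ, E) (⊤ : ℕ∞) fun g : G => a • g)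
    -- `K` is an `A`-invariant maximal compact subgroup of `G`
    (K : Subgroup G) (hKcompact : IsCompact (K : Set G))
    (hKmax : ∀ L : Subgroup G, IsCompact (L : Set G) → K ≤ L → L = K)
    (hKinv : ∀ a : A, a • (K : Set G) = K) :
    -- `K ⋊ A` is a subgroup of `G ⋊ A` ...
    ∃ M : Subgroup (G ⋊[MulDistribMulAction.toMulAut A G] A),
      (M : Set (G ⋊[MulDistribMulAction.toMulAut A G] A)) = {p | p.left ∈ K} ∧
      -- ... which is compact ...
      IsCompact (M : Set (G ⋊[MulDistribMulAction.toMulAut A G] A)) ∧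
      -- ... and maximal among compact subgroups of `G ⋊ A`
      (∀ L : Subgroup (G ⋊[MulDistribMulAction.toMulAut A G] A),
        IsCompact (L : Set (G ⋊[MulDistribMulAction.toMulAut A G] A)) → M ≤ L → L = M) := by
  classical
  set φ := MulDistribMulAction.toMulAut A G with hφ
  have hKmem : ∀ (a : A) (g : G), g ∈ K → a • g ∈ K := fun a g hg => by
    have h := Set.smul_mem_smul_set (a := a) hg
    rwa [hKinv a] at h
  let f := semidirectProductHomeomorph φ
  let M : Subgroup (G ⋊[φ] A) :=
    { carrier := {p | p.left ∈ K}
      one_mem' := K.one_mem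
      mul_mem' := by
        intro p q hp hq
        simp only [Set.mem_setOf_eq, SemidirectProduct.mul_left] at *
        exact K.mul_mem hp (hKmem _ _ hq)
      inv_mem' := by
        intro p hp
        simp only [Set.mem_setOf_eq, SemidirectProduct.inv_left] at *
        exact hKmem _ _ (K.inv_mem hp) }
  have hMset : (M : Set (G ⋊[φ] A)) = {p | p.left ∈ K} := rfl
  have hMc : IsCompact (M : Set (G ⋊[φ] A)) := by
    have h1 : (M : Set (G ⋊[φ] A)) = f ⁻¹' ((K : Set G) ×ˢ (Set.univ : Set A)) := by
      ext p
      simp [f, semidirectProductHomeomorph, hMset]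
    rw [h1]
    exact f.isCompact_preimage.mpr (hKcompact.prod isCompact_univ)
  refine ⟨M, hMset, hMc, ?_⟩
  intro L hLc hML
  have hT1 : T1Space A := aux_t1Space_of_chartedSpace (H := F)
  let K' : Subgroup G :=
    { carrier := {g | (⟨g, 1⟩ : G ⋊[φ] A) ∈ L}
      one_mem' := L.one_mem
      mul_mem' := by
        intro g h hg hh
        have hmul : (⟨g, 1⟩ : G ⋊[φ] A) * ⟨h, 1⟩ = ⟨g * h, 1⟩ := by
          ext <;> simp [SemidirectProduct.mul_left, SemidirectProduct.mul_right]
        have := L.mul_mem hg hh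
        rwa [hmul] at this
      inv_mem' := by
        intro g hg
        have hinv : (⟨g, 1⟩ : G ⋊[φ] A)⁻¹ = ⟨g⁻¹, 1⟩ := by
          ext <;> simp [SemidirectProduct.inv_left, SemidirectProduct.inv_right]
        have := L.inv_mem hg
        rwa [hinv] at this }
  have hK'c : IsCompact (K' : Set G) := by
    have h2 : (K' : Set G) =
        Prod.fst '' ((f '' (L : Set (G ⋊[φ] A))) ∩ (Set.univ ×ˢ ({1} : Set A))) := by
      ext g
      constructor
      · intro hg
        exact ⟨(g, 1), ⟨⟨⟨g, 1⟩, hg, rfl⟩, ⟨Set.mem_univ _, rfl⟩⟩, rfl⟩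
      · rintro ⟨⟨g', a⟩, ⟨⟨p, hp, hfp⟩, ⟨-, ha⟩⟩, rfl⟩
        simp only [Set.mem_singleton_iff] at ha
        subst ha
        have hp' : p = ⟨g', 1⟩ := f.injective hfp
        rwa [hp'] at hp
    rw [h2]
    exact (((hLc.image f.continuous).inter_right
      (isClosed_univ.prod isClosed_singleton)).image continuous_fst)
  have hKK' : K ≤ K' := by
    intro g hg
    exact hML (show (⟨g, 1⟩ : G ⋊[φ] A) ∈ M from hg)
  have hK'K : K' = K := hKmax K' hK'c hKK'
  refine le_antisymm ?_ hML
  intro p hp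
  have h2 : (⟨1, p.right⁻¹⟩ : G ⋊[φ] A) ∈ L := hML (show _ ∈ M from K.one_mem)
  have h3 : p * ⟨1, p.right⁻¹⟩ ∈ L := L.mul_mem hp h2
  have h4 : p * ⟨1, p.right⁻¹⟩ = (⟨p.left, 1⟩ : G ⋊[φ] A) := by
    ext <;> simp [SemidirectProduct.mul_left, SemidirectProduct.mul_right]
  rw [h4] at h3
  have : p.left ∈ K' := h3
  rw [hK'K] at this
  exact this
end

section
/- Let G be a Lie group, let A be a compact Lie group acting on G by automorphisms, let K be an A-invariant subgroup of G, and suppose there exist linear subspaces 𝔭₁, …, 𝔭ᵣ of the Lie algebra 𝔤 of G, each invariant under Ad_G(K) and under the induced A-action on 𝔤, such that the map φ : K × 𝔭₁ × ⋯ × 𝔭ᵣ → G, φ(k, X₁, …, Xᵣ) = k·exp(X₁)⋯exp(Xᵣ), is injective. If γ₁, γ₂ : A → K are cocycles and g ∈ G satisfies γ₂(a) = g⁻¹·γ₁(a)·a(g) for all a ∈ A, then writing g = φ(k, X₁, …, Xᵣ), the element k ∈ K satisfies γ₂(a) = k⁻¹·γ₁(a)·a(k) for all a ∈ A. -/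
open scoped Manifold Pointwise

/-- Let `G` be a Lie group, `A` a compact Lie group acting on `G` by
automorphisms, `K` an `A`-invariant subgroup of `G`, and suppose there are linear subspaces
`𝔭 1, …, 𝔭 r` of the Lie algebra `𝔤` of `G`, invariant under `Ad_G(K)` and `A`, such that
`φ : K × 𝔭 1 × ⋯ × 𝔭 r → G`, `φ(k, X₁, …, Xᵣ) = k · exp X₁ ⋯ exp Xᵣ`, is injective.
If `γ₁, γ₂ : A → K` are cocycles and `g ∈ G` satisfies `γ₂ a = g⁻¹ * γ₁ a * a • g` for all
`a`, then writing `g = φ (k, X₁, …, Xᵣ)` one has `γ₂ a = k⁻¹ * γ₁ a * a • k` for all `a`.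

The Lie algebra `𝔤` of `G`, the exponential map `Exp : 𝔤 → G`, the adjoint representation
`Ad : G →* GL(𝔤)` and the differentiated action `dA : A →* GL(𝔤)` are axiomatized through
their characteristic identities `g · Exp X · g⁻¹ = Exp (Ad g X)` and `a • Exp X = Exp (dA a X)`,
which are the only properties of them used in the statement and its proof. -/
theorem cohomologous_in_K_of_cohomologous_of_injective_decomposition
    -- `G` is a (finite-dimensional real) Lie group
    {E : Type*} [NormedAddCommGroup E] [NormedSpace ℝ E] [FiniteDimensional ℝ E]
    {G : Type*} [TopologicalSpace G] [ChartedSpace E G] [Group G] [IsTopologicalGroup G]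
    [LieGroup 𝓘(ℝ, E) (⊤ : ℕ∞) G]
    -- `A` is a compact (finite-dimensional real) Lie group
    {F : Type*} [NormedAddCommGroup F] [NormedSpace ℝ F] [FiniteDimensional ℝ F]
    {A : Type*} [TopologicalSpace A] [ChartedSpace F A] [Group A] [IsTopologicalGroup A]
    [LieGroup 𝓘(ℝ, F) (⊤ : ℕ∞) A] [CompactSpace A]
    -- `A` acts on `G` by automorphisms, continuously in both variables, each `a` acting smoothly
    [MulDistribMulAction A G] [ContinuousSMul A G]
    (hsmooth : ∀ a : A, ContMDiff 𝓘(ℝ, E) 𝓘(ℝ, E) (⊤ : ℕ∞) fun g : G => a • g)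
    -- the Lie algebra `𝔤` of `G` (as a real vector space), with the exponential map,
    -- the adjoint action of `G`, and the differentiated action of `A`
    (𝔤 : Type*) [AddCommGroup 𝔤] [Module ℝ 𝔤] [FiniteDimensional ℝ 𝔤]
    (Exp : 𝔤 → G) (Ad : G →* (𝔤 ≃ₗ[ℝ] 𝔤)) (dA : A →* (𝔤 ≃ₗ[ℝ] 𝔤))
    (hAd : ∀ (g : G) (X : 𝔤), g * Exp X * g⁻¹ = Exp (Ad g X))
    (hdA : ∀ (a : A) (X : 𝔤), a • Exp X = Exp (dA a X))
    -- `K` is an `A`-invariant subgroup of `G`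
    (K : Subgroup G) (hKinv : ∀ a : A, a • (K : Set G) = K)
    -- `𝔭 0, …, 𝔭 (r-1)` are linear subspaces of `𝔤` invariant under `Ad_G(K)` and `A`
    (r : ℕ) (𝔭 : Fin r → Submodule ℝ 𝔤)
    (h𝔭Ad : ∀ (i : Fin r), ∀ k ∈ K, ∀ X ∈ 𝔭 i, Ad k X ∈ 𝔭 i)
    (h𝔭dA : ∀ (i : Fin r) (a : A), ∀ X ∈ 𝔭 i, dA a X ∈ 𝔭 i)
    -- the map `φ(k, X₁, …, Xᵣ) = k · exp X₁ ⋯ exp Xᵣ` is injective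
    (hφinj : Function.Injective
      (fun p : K × (∀ i : Fin r, 𝔭 i) =>
        (p.1 : G) * (List.ofFn fun i : Fin r => Exp (p.2 i : 𝔤)).prod))
    -- `γ₁, γ₂ : A → K` are cocycles
    (γ₁ γ₂ : A → G) (hγ₁cont : Continuous γ₁) (hγ₂cont : Continuous γ₂)
    (hγ₁cocycle : ∀ a b : A, γ₁ (a * b) = γ₁ a * a • γ₁ b)
    (hγ₂cocycle : ∀ a b : A, γ₂ (a * b) = γ₂ a * a • γ₂ b)
    (hγ₁K : ∀ a : A, γ₁ a ∈ K) (hγ₂K : ∀ a : A, γ₂ a ∈ K)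
    -- `g ∈ G` realizes a cohomology between `γ₁` and `γ₂`
    (g : G) (hg : ∀ a : A, γ₂ a = g⁻¹ * γ₁ a * a • g)
    -- write `g = φ(k, X₁, …, Xᵣ)`
    (k : K) (X : ∀ i : Fin r, 𝔭 i)
    (hgφ : g = (k : G) * (List.ofFn fun i : Fin r => Exp (X i : 𝔤)).prod) :
    -- then `k` realizes a cohomology between `γ₁` and `γ₂` inside `K`
    ∀ a : A, γ₂ a = (k : G)⁻¹ * γ₁ a * a • (k : G) := by
  intro a
  have key : ∀ (h : G →* G), h (List.ofFn fun i : Fin r => Exp ((X i : 𝔤))).prod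
      = (List.ofFn fun i : Fin r => h (Exp ((X i : 𝔤)))).prod := by
    intro h
    rw [map_list_prod, List.map_ofFn]
    rfl
  have haK : a • (k : G) ∈ K := by
    have h := Set.smul_mem_smul_set (a := a) k.2
    rwa [hKinv a] at h
  have hmem : (γ₁ a)⁻¹ * (k : G) * γ₂ a ∈ K :=
    K.mul_mem (K.mul_mem (K.inv_mem (hγ₁K a)) k.2) (hγ₂K a)
  have hconjmem : ∀ i, Ad (γ₂ a)⁻¹ ((X i : 𝔤)) ∈ 𝔭 i := fun i =>
    h𝔭Ad i _ (K.inv_mem (hγ₂K a)) _ (X i).2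
  have hdAmem : ∀ i, dA a ((X i : 𝔤)) ∈ 𝔭 i := fun i => h𝔭dA i a _ (X i).2
  have h1 : a • g =
      (a • (k : G)) * (List.ofFn fun i : Fin r => Exp (dA a ((X i : 𝔤)))).prod := by
    rw [hgφ, smul_mul']
    congr 1
    have h := key (MulDistribMulAction.toMonoidHom G a)
    simp only [MulDistribMulAction.toMonoidHom_apply] at h
    rw [h]
    exact congrArg List.prod (congrArg List.ofFn (funext fun i => hdA a _))
  have h2 : a • g = ((γ₁ a)⁻¹ * (k : G) * γ₂ a) *
      (List.ofFn fun i : Fin r => Exp (Ad (γ₂ a)⁻¹ ((X i : 𝔤)))).prod := by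
    have hag : a • g = (γ₁ a)⁻¹ * g * γ₂ a := by
      rw [hg a]; group
    rw [hag, hgφ]
    have h := key ((MulAut.conj (γ₂ a)⁻¹).toMonoidHom)
    simp only [MulEquiv.toMonoidHom_eq_coe, MonoidHom.coe_coe, MulAut.conj_apply,
      inv_inv] at h
    have hc : (List.ofFn fun i : Fin r => Exp (Ad (γ₂ a)⁻¹ ((X i : 𝔤)))).prod
        = (γ₂ a)⁻¹ * (List.ofFn fun i : Fin r => Exp ((X i : 𝔤))).prod * γ₂ a := by
      rw [h]
      exact congrArg List.prod (congrArg List.ofFn (funext fun i => by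
        rw [← hAd (γ₂ a)⁻¹ ((X i : 𝔤)), inv_inv]))
    rw [hc]
    group
  have hpq : (⟨⟨a • (k : G), haK⟩, fun i => ⟨dA a ((X i : 𝔤)), hdAmem i⟩⟩ :
      K × (∀ i : Fin r, 𝔭 i)) =
      ⟨⟨(γ₁ a)⁻¹ * (k : G) * γ₂ a, hmem⟩, fun i => ⟨Ad (γ₂ a)⁻¹ ((X i : 𝔤)), hconjmem i⟩⟩ := by
    apply hφinj
    simp only
    rw [← h1, ← h2]
  have hk : a • (k : G) = (γ₁ a)⁻¹ * (k : G) * γ₂ a :=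
    congrArg (fun p : K × (∀ i : Fin r, 𝔭 i) => (p.1 : G)) hpq
  rw [hk]
  group
end
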